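/- The 3-diameter of the unit ball of ℍ is attained at cube roots of unity on any slice: for every I ∈ 𝕊 and every u ∈ ℍ with |u| = 1, setting α_j = u·(cos(2πj/3) + I·sin(2πj/3)) for j = 1,2,3, one has d₃(𝔹) = (|α₂ − α₁|·|α₃ − α₁|·|α₃ − α₂|)^{1/3}; in particular d₃(𝔹) = √3. -/

import Mathlib

noncomputable section

open Filter Metric Set

local notation "ℍ" => Quaternion ℝ

/-- The `n`-diameter of a subset `E ⊆ ℍ`:
`d_n(E) = sup_{w₁,…,w_n ∈ E} (∏_{1 ≤ j < k ≤ n} |w_k − w_j|)^{2/(n(n−1))}`. -/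
def nDiamReal (n : ℕ) (E : Set ℍ) : ℝ :=
  sSup {x : ℝ | ∃ w : Fin n → ℍ, (∀ i, w i ∈ E) ∧
    x = (∏ p ∈ Finset.univ.filter (fun p : Fin n × Fin n => p.1 < p.2), ‖w p.2 - w p.1‖) ^
      (2 / ((n : ℝ) * ((n : ℝ) - 1)))}

/-! ### Auxiliary lemmas -/

private lemma aux_prod3 (w : Fin 3 → ℍ) :
    ∏ p ∈ Finset.univ.filter (fun p : Fin 3 × Fin 3 => p.1 < p.2), ‖w p.2 - w p.1‖
      = ‖w 1 - w 0‖ * ‖w 2 - w 0‖ * ‖w 2 - w 1‖ := by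
  have h : Finset.univ.filter (fun p : Fin 3 × Fin 3 => p.1 < p.2)
      = {((0:Fin 3),(1:Fin 3)), (0,2), (1,2)} := by decide
  rw [h, Finset.prod_insert (by decide), Finset.prod_insert (by decide),
    Finset.prod_singleton]
  ring

private lemma aux_sum_sq (a b c : ℍ) :
    ‖b-a‖^2 + ‖c-a‖^2 + ‖c-b‖^2 ≤ 3*(‖a‖^2 + ‖b‖^2 + ‖c‖^2) := by
  have h1 := norm_sub_sq_real b a
  have h2 := norm_sub_sq_real c a
  have h3 := norm_sub_sq_real c b
  have h4 : (0:ℝ) ≤ ‖a+b+c‖^2 := sq_nonneg _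
  have h5 : ‖a+b+c‖^2 = ‖a+b‖^2 + 2 * inner ℝ (a+b) c + ‖c‖^2 := norm_add_sq_real _ _
  have h6 : ‖a+b‖^2 = ‖a‖^2 + 2 * inner ℝ a b + ‖b‖^2 := norm_add_sq_real _ _
  have h7 : inner ℝ (a+b) c = inner ℝ a c + inner ℝ b c := inner_add_left _ _ _
  have h8 : inner ℝ b a = inner ℝ a b := real_inner_comm _ _
  have h9 : inner ℝ c a = inner ℝ a c := real_inner_comm _ _
  have h10 : inner ℝ c b = inner ℝ b c := real_inner_comm _ _
  nlinarith

private lemma aux_amgm (x y z : ℝ) (hx : 0 ≤ x) (hy : 0 ≤ y) (hz : 0 ≤ z)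
    (h : x + y + z ≤ 9) : x*y*z ≤ 27 := by
  have key : 27*(x*y*z) ≤ (x+y+z)^3 := by
    nlinarith [mul_nonneg hz (sq_nonneg (x-y)), mul_nonneg hx (sq_nonneg (y-z)),
      mul_nonneg hy (sq_nonneg (x-z)), mul_nonneg (mul_nonneg hx hy) hz]
  have h9 : (x+y+z)^3 ≤ 9^3 :=
    pow_le_pow_left₀ (add_nonneg (add_nonneg hx hy) hz) h 3
  linarith

private lemma aux_rpow_cube (t : ℝ) (ht : 0 ≤ t) : (t^3) ^ ((1:ℝ)/3) = t := by
  rw [← Real.rpow_natCast t 3, ← Real.rpow_mul ht]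
  norm_num

set_option maxHeartbeats 1600000 in
/-- The `3`-diameter of the unit ball `𝔹 ⊂ ℍ` is attained at (rotated) cube roots of unity
on any slice: for every imaginary unit `I` and every `u` with `|u| = 1`, setting
`α_j = u (cos(2πj/3) + sin(2πj/3) I)`, one has
`d₃(𝔹) = (|α₂ − α₁| |α₃ − α₁| |α₃ − α₂|)^{1/3}`; in particular `d₃(𝔹) = √3`. -/
theorem d3_ball_eq_roots_of_unity (I : ℍ) (hI : I ^ 2 = -1) (u : ℍ) (hu : ‖u‖ = 1)
    (α : ℕ → ℍ)
    (hα : ∀ j : ℕ, α j =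
      u * (((Real.cos (2 * Real.pi * j / 3) : ℝ) : ℍ) + Real.sin (2 * Real.pi * j / 3) • I)) :
    nDiamReal 3 (Metric.ball 0 1) = (‖α 2 - α 1‖ * ‖α 3 - α 1‖ * ‖α 3 - α 2‖) ^ ((1 : ℝ) / 3) ∧
      nDiamReal 3 (Metric.ball 0 1) = Real.sqrt 3 := by
  have s3 : Real.sqrt 3 ^ 2 = 3 := Real.sq_sqrt (by norm_num)
  have s3nn : (0:ℝ) ≤ Real.sqrt 3 := Real.sqrt_nonneg 3
  have s3pos : (0:ℝ) < Real.sqrt 3 := Real.sqrt_pos.mpr (by norm_num)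
  -- basic facts about the imaginary unit I
  have hre : I.re = 0 := by
    have h1 := congrArg QuaternionAlgebra.re hI
    have h2 := congrArg QuaternionAlgebra.imI hI
    have h3 := congrArg QuaternionAlgebra.imJ hI
    have h4 := congrArg QuaternionAlgebra.imK hI
    simp [pow_two, Quaternion.re_mul, Quaternion.imI_mul, Quaternion.imJ_mul,
      Quaternion.imK_mul, Quaternion.re_one, Quaternion.imI_one, Quaternion.imJ_one,
      Quaternion.imK_one] at h1 h2 h3 h4
    nlinarith [sq_nonneg I.re, sq_nonneg I.imI, sq_nonneg I.imJ, sq_nonneg I.imK]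
  have hs : I.imI^2 + I.imJ^2 + I.imK^2 = 1 := by
    have h1 := congrArg QuaternionAlgebra.re hI
    simp [pow_two, Quaternion.re_mul, hre, Quaternion.re_one] at h1
    nlinarith
  -- the norm of `a + b • I`
  have key : ∀ a b : ℝ, ‖(a:ℍ) + b • I‖ = Real.sqrt (a^2 + b^2) := by
    intro a b
    have h : Quaternion.normSq ((a:ℍ) + b • I) = a^2 + b^2 := by
      simp [Quaternion.normSq_def', hre]
      ring_nf
      nlinarith [hs]
    rw [← h, Quaternion.normSq_eq_norm_mul_self, Real.sqrt_mul_self (norm_nonneg _)]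
  -- norms of the α's
  have hnormα : ∀ j : ℕ, ‖α j‖ = 1 := by
    intro j
    rw [hα j, norm_mul, hu, one_mul, key]
    rw [Real.cos_sq_add_sin_sq, Real.sqrt_one]
  -- distances between α's
  have hdist : ∀ j k : ℕ, ‖α k - α j‖ =
      Real.sqrt ((Real.cos (2 * Real.pi * k / 3) - Real.cos (2 * Real.pi * j / 3))^2 +
        (Real.sin (2 * Real.pi * k / 3) - Real.sin (2 * Real.pi * j / 3))^2) := by
    intro j k
    rw [hα j, hα k, ← mul_sub, norm_mul, hu, one_mul]
    rw [show (((Real.cos (2 * Real.pi * k / 3) : ℝ) : ℍ) + Real.sin (2 * Real.pi * k / 3) • I) -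
        (((Real.cos (2 * Real.pi * j / 3) : ℝ) : ℍ) + Real.sin (2 * Real.pi * j / 3) • I)
        = (((Real.cos (2 * Real.pi * k / 3) - Real.cos (2 * Real.pi * j / 3) : ℝ)) : ℍ) +
          (Real.sin (2 * Real.pi * k / 3) - Real.sin (2 * Real.pi * j / 3)) • I by
      push_cast [sub_smul]; abel]
    exact key _ _
  -- trigonometric values
  have hc1 : Real.cos (2 * Real.pi * (1:ℕ) / 3) = -(1/2) := by
    have h : 2 * Real.pi * ((1:ℕ):ℝ) / 3 = Real.pi - Real.pi/3 := by push_cast; ring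
    rw [h, Real.cos_pi_sub, Real.cos_pi_div_three]
  have hs1 : Real.sin (2 * Real.pi * (1:ℕ) / 3) = Real.sqrt 3 / 2 := by
    have h : 2 * Real.pi * ((1:ℕ):ℝ) / 3 = Real.pi - Real.pi/3 := by push_cast; ring
    rw [h, Real.sin_pi_sub, Real.sin_pi_div_three]
  have hc2 : Real.cos (2 * Real.pi * (2:ℕ) / 3) = -(1/2) := by
    have h : 2 * Real.pi * ((2:ℕ):ℝ) / 3 = Real.pi/3 + Real.pi := by push_cast; ring
    rw [h, Real.cos_add_pi, Real.cos_pi_div_three]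
  have hs2 : Real.sin (2 * Real.pi * (2:ℕ) / 3) = -(Real.sqrt 3 / 2) := by
    have h : 2 * Real.pi * ((2:ℕ):ℝ) / 3 = Real.pi/3 + Real.pi := by push_cast; ring
    rw [h, Real.sin_add_pi, Real.sin_pi_div_three]
  have hc3 : Real.cos (2 * Real.pi * (3:ℕ) / 3) = 1 := by
    have h : 2 * Real.pi * ((3:ℕ):ℝ) / 3 = 2*Real.pi := by push_cast; ring
    rw [h, Real.cos_two_pi]
  have hs3 : Real.sin (2 * Real.pi * (3:ℕ) / 3) = 0 := by
    have h : 2 * Real.pi * ((3:ℕ):ℝ) / 3 = 2*Real.pi := by push_cast; ring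
    rw [h, Real.sin_two_pi]
  -- the three distances are all √3
  have hd21 : ‖α 2 - α 1‖ = Real.sqrt 3 := by
    rw [hdist 1 2, hc1, hc2, hs1, hs2]
    rw [show (-(1/2) - -(1/2):ℝ)^2 + (-(Real.sqrt 3/2) - Real.sqrt 3/2)^2 = 3 by
      linear_combination s3]
  have hd31 : ‖α 3 - α 1‖ = Real.sqrt 3 := by
    rw [hdist 1 3, hc1, hc3, hs1, hs3]
    rw [show ((1:ℝ) - -(1/2))^2 + (0 - Real.sqrt 3/2)^2 = 3 by
      linear_combination (1/4 : ℝ) * s3]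
  have hd32 : ‖α 3 - α 2‖ = Real.sqrt 3 := by
    rw [hdist 2 3, hc2, hc3, hs2, hs3]
    rw [show ((1:ℝ) - -(1/2))^2 + (0 - -(Real.sqrt 3/2))^2 = 3 by
      linear_combination (1/4 : ℝ) * s3]
  -- the exponent
  have hexp : (2 / (((3:ℕ):ℝ) * (((3:ℕ):ℝ) - 1))) = (1:ℝ)/3 := by norm_num
  -- the main computation: the supremum is √3
  have main : nDiamReal 3 (Metric.ball 0 1) = Real.sqrt 3 := by
    unfold nDiamReal
    apply csSup_eq_of_forall_le_of_forall_lt_exists_gt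
    · exact ⟨_, fun _ => (0:ℍ), fun _ => mem_ball_self one_pos, rfl⟩
    · rintro x ⟨w, hw, rfl⟩
      rw [aux_prod3, hexp]
      have hw' : ∀ i, ‖w i‖ < 1 := by
        intro i; rw [← mem_ball_zero_iff]; exact hw i
      have hsum : ‖w 1 - w 0‖^2 + ‖w 2 - w 0‖^2 + ‖w 2 - w 1‖^2 ≤ 9 := by
        have h := aux_sum_sq (w 0) (w 1) (w 2)
        have h0 := hw' 0; have h1 := hw' 1; have h2 := hw' 2
        have n0 := norm_nonneg (w 0); have n1 := norm_nonneg (w 1)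
        have n2 := norm_nonneg (w 2)
        nlinarith
      have hP : ‖w 1 - w 0‖ * ‖w 2 - w 0‖ * ‖w 2 - w 1‖ ≤ Real.sqrt 3 ^ 3 := by
        have h27 : ‖w 1 - w 0‖^2 * ‖w 2 - w 0‖^2 * ‖w 2 - w 1‖^2 ≤ 27 :=
          aux_amgm _ _ _ (sq_nonneg _) (sq_nonneg _) (sq_nonneg _) hsum
        have h27' : (‖w 1 - w 0‖ * ‖w 2 - w 0‖ * ‖w 2 - w 1‖)^2 ≤ 27 := by
          nlinarith [h27]
        have hle : ‖w 1 - w 0‖ * ‖w 2 - w 0‖ * ‖w 2 - w 1‖ ≤ Real.sqrt 27 :=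
          Real.le_sqrt_of_sq_le h27'
        have h27e : Real.sqrt 27 = Real.sqrt 3 ^ 3 := by
          rw [show (27:ℝ) = 3^2 * 3 by norm_num,
            Real.sqrt_mul (by positivity), Real.sqrt_sq (by norm_num : (0:ℝ) ≤ 3)]
          linear_combination (-(Real.sqrt 3)) * s3
        linarith [hle, h27e.le, h27e.ge]
      calc (‖w 1 - w 0‖ * ‖w 2 - w 0‖ * ‖w 2 - w 1‖) ^ ((1:ℝ)/3)
          ≤ (Real.sqrt 3 ^ 3) ^ ((1:ℝ)/3) := by
            apply Real.rpow_le_rpow _ hP (by norm_num)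
            positivity
        _ = Real.sqrt 3 := aux_rpow_cube _ s3nn
    · intro y hy
      set r : ℝ := max (1/2) ((y / Real.sqrt 3 + 1)/2) with hr
      have hr0 : (0:ℝ) < r := lt_of_lt_of_le (by norm_num) (le_max_left _ _)
      have hr1 : r < 1 := by
        apply max_lt (by norm_num)
        have : y / Real.sqrt 3 < 1 := (div_lt_one s3pos).mpr hy
        linarith
      have hyr : y < r * Real.sqrt 3 := by
        have h1 : (y / Real.sqrt 3 + 1)/2 * Real.sqrt 3 ≤ r * Real.sqrt 3 :=
          mul_le_mul_of_nonneg_right (le_max_right _ _) s3nn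
        have h2 : y / Real.sqrt 3 * Real.sqrt 3 = y := div_mul_cancel₀ y (ne_of_gt s3pos)
        nlinarith
      refine ⟨_, ⟨fun i : Fin 3 => r • α (i.val + 1), ?_, rfl⟩, ?_⟩
      · intro i
        rw [mem_ball_zero_iff, norm_smul, Real.norm_eq_abs, abs_of_pos hr0, hnormα, mul_one]
        exact hr1
      · have e1 : (fun i : Fin 3 => r • α (i.val + 1)) 1 - (fun i : Fin 3 => r • α (i.val + 1)) 0
            = r • (α 2 - α 1) := by show r • α 2 - r • α 1 = _; rw [smul_sub]
        have e2 : (fun i : Fin 3 => r • α (i.val + 1)) 2 - (fun i : Fin 3 => r • α (i.val + 1)) 0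
            = r • (α 3 - α 1) := by show r • α 3 - r • α 1 = _; rw [smul_sub]
        have e3 : (fun i : Fin 3 => r • α (i.val + 1)) 2 - (fun i : Fin 3 => r • α (i.val + 1)) 1
            = r • (α 3 - α 2) := by show r • α 3 - r • α 2 = _; rw [smul_sub]
        rw [aux_prod3 (fun i : Fin 3 => r • α (i.val + 1)), hexp, e1, e2, e3,
          norm_smul, norm_smul, norm_smul, Real.norm_eq_abs,
          abs_of_pos hr0, hd21, hd31, hd32]
        rw [show r * Real.sqrt 3 * (r * Real.sqrt 3) * (r * Real.sqrt 3)
            = (r * Real.sqrt 3)^3 by ring]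
        rw [aux_rpow_cube _ (mul_nonneg hr0.le s3nn)]
        exact hyr
  refine ⟨?_, main⟩
  rw [main, hd21, hd31, hd32,
    show Real.sqrt 3 * Real.sqrt 3 * Real.sqrt 3 = Real.sqrt 3 ^ 3 by ring,
    aux_rpow_cube _ s3nn]
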